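/- arXiv:2504.16617 — 4 statements merged into one kernel-verified Lean document; each statement's English description precedes it below -/
import Mathlib

section
/- Every property P ⊆ Σ* can be expressed as the intersection of a safety property and a liveness property; concretely, P = cl(P) ∩ (P ∪ (Σ* \ cl(P))), where cl(P) = { y | ∃ x ∈ P, y is a prefix of x } is a safety property and P ∪ (Σ* \ cl(P)) is a liveness property. -/
def Safety {E : Type*} (P : Set (List E)) : Prop :=
  ∀ x y : List E, x ++ y ∈ P → x ∈ P

def Liveness {E : Type*} (P : Set (List E)) : Prop :=
  ∀ x : List E, ∃ y : List E, x ++ y ∈ P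

/-- Prefix closure of a property. -/
def cl {E : Type*} (P : Set (List E)) : Set (List E) :=
  {y | ∃ x ∈ P, y <+: x}

/-- Every property is the intersection of a safety and a liveness property:
    P = cl(P) ∩ (P ∪ (Σ* \ cl(P))). -/
theorem safety_liveness_decomposition {E : Type*} (P : Set (List E)) :
    Safety (cl P) ∧ Liveness (P ∪ (Set.univ \ cl P)) ∧
      P = cl P ∩ (P ∪ (Set.univ \ cl P)) := by
  refine ⟨?_, ?_, ?_⟩
  · rintro x y ⟨z, hz, hpre⟩
    exact ⟨z, hz, ((x.prefix_append y).trans hpre)⟩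
  · intro x
    by_cases hx : x ∈ cl P
    · obtain ⟨z, hz, y, rfl⟩ := hx
      exact ⟨y, Or.inl hz⟩
    · exact ⟨[], Or.inr ⟨trivial, by simpa using hx⟩⟩
  · ext p
    constructor
    · intro hp
      exact ⟨⟨p, hp, List.prefix_refl p⟩, Or.inl hp⟩
    · rintro ⟨hcl, hp | ⟨-, hn⟩⟩
      · exact hp
      · exact absurd hcl hn
end

section
/- A property P ⊆ Σ* is an authorization property if and only if it is a safety property and is strictly localized (P = P̂). Formally: [∀ x y ∈ Σ*, (∀ u ∈ S, (x ++ y)↾u ∈ P_u) → x ∈ P] if and only if [P is prefix-closed and P = { t | ∀ u, t↾u ∈ P_u }]. -/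
def purge {E S : Type*} [DecidableEq S] (part : E → S) (t : List E) (u : S) : List E :=
  t.filter (fun e => decide (part e = u))

def localProj {E S : Type*} [DecidableEq S] (part : E → S) (P : Set (List E)) (u : S) :
    Set (List E) :=
  (fun x => purge part x u) '' P

def hat {E S : Type*} [DecidableEq S] (part : E → S) (P : Set (List E)) : Set (List E) :=
  {t | ∀ u, purge part t u ∈ localProj part P u}

/-- Authorization = safety + strict localization. -/
theorem auth_iff_safety_and_localized {E S : Type*} [DecidableEq S] (part : E → S)
    (P : Set (List E)) :
    (∀ x y : List E, (∀ u : S, purge part (x ++ y) u ∈ localProj part P u) → x ∈ P) ↔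
      ((∀ x y : List E, x ++ y ∈ P → x ∈ P) ∧ P = hat part P) := by
  constructor
  · intro auth
    refine ⟨fun x y hxy => auth x y (fun u => ⟨x ++ y, hxy, rfl⟩), ?_⟩
    ext t
    constructor
    · intro ht u
      exact ⟨t, ht, rfl⟩
    · intro ht
      exact auth t [] (by simpa [hat] using ht)
  · rintro ⟨safe, hloc⟩ x y h
    have : x ++ y ∈ hat part P := h
    rw [← hloc] at this
    exact safe x y this
end

section
/- Every availability property is, after strict localization, a liveness property: if D ⊆ Σ* satisfies the availability condition, then the localization D̂ = { t | ∀ u, t↾u ∈ D_u } is a liveness property over Σ*. -/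
lemma purge_append {E S : Type*} [DecidableEq S] (part : E → S) (a b : List E) (u : S) :
    purge part (a ++ b) u = purge part a u ++ purge part b u :=
  List.filter_append ..

lemma purge_eq_nil {E S : Type*} [DecidableEq S] (part : E → S) (t : List E) (u : S)
    (h : ∀ e ∈ t, part e ≠ u) : purge part t u = [] := by
  simp only [purge, List.filter_eq_nil_iff, decide_eq_true_eq]
  exact h

lemma purge_eq_self {E S : Type*} [DecidableEq S] (part : E → S) (t : List E) (u : S)
    (h : ∀ e ∈ t, part e = u) : purge part t u = t := by
  simp only [purge, List.filter_eq_self, decide_eq_true_eq]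
  exact h

lemma aux_ext {E S : Type*} [DecidableEq S] (part : E → S) (D : Set (List E))
    (hAvail : ∀ x : List E, ∀ u : S, ∃ y : List E, (∀ e ∈ y, part e = u) ∧
        purge part x u ++ y ∈ localProj part D u) (L : List S) (x : List E) :
    ∃ z : List E, (∀ e ∈ z, part e ∈ L) ∧
      ∀ u ∈ L, purge part (x ++ z) u ∈ localProj part D u := by
  induction L with
  | nil => exact ⟨[], by simp, by simp⟩
  | cons u L ih =>
    obtain ⟨z', hz'sub, hz'⟩ := ih
    obtain ⟨y, hy, hyD⟩ := hAvail (x ++ z') u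
    refine ⟨z' ++ y, ?_, ?_⟩
    · intro e he
      rcases List.mem_append.mp he with h | h
      · exact List.mem_cons_of_mem _ (hz'sub e h)
      · exact (hy e h) ▸ List.mem_cons_self (a := u) (l := L)
    · intro v hv
      by_cases hvu : v = u
      · subst hvu
        rw [← List.append_assoc, purge_append, purge_eq_self part y v hy]
        exact hyD
      · rw [← List.append_assoc, purge_append,
          purge_eq_nil part y v (fun e he => (hy e he) ▸ hvu ∘ Eq.symm),
          List.append_nil]
        exact hz' v ((List.mem_cons.mp hv).resolve_left hvu)

/-- The strict localization of an availability property is a liveness property. -/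
theorem localization_of_availability_is_liveness {E S : Type*} [DecidableEq S]
    (part : E → S) (D : Set (List E))
    (hAvail : ∀ x : List E, ∀ u : S, ∃ y : List E, (∀ e ∈ y, part e = u) ∧
        purge part x u ++ y ∈ localProj part D u) :
    ∀ x : List E, ∃ z : List E, x ++ z ∈ hat part D := by
  intro x
  by_cases hS : Nonempty S
  · obtain ⟨u0⟩ := hS
    obtain ⟨y0, -, d0, hd0, -⟩ := hAvail [] u0
    set L : List S := x.map part ++ d0.map part with hL
    obtain ⟨z, hzsub, hz⟩ := aux_ext part D hAvail L x
    refine ⟨z, fun u => ?_⟩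
    by_cases hu : u ∈ L
    · exact hz u hu
    · have hx : purge part (x ++ z) u = [] := by
        apply purge_eq_nil
        intro e he hpe
        rcases List.mem_append.mp he with h | h
        · exact hu (hL ▸ List.mem_append.mpr (Or.inl (hpe ▸ List.mem_map_of_mem (f := part) h)))
        · exact hu (hpe ▸ hzsub e h)
      have hd : purge part d0 u = [] := by
        apply purge_eq_nil
        intro e he hpe
        exact hu (hL ▸ List.mem_append.mpr (Or.inr (hpe ▸ List.mem_map_of_mem (f := part) he)))
      rw [hx, ← hd]
      exact ⟨d0, hd0, rfl⟩
  · exact ⟨[], fun u => absurd ⟨u⟩ hS⟩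
end

section
/- The Laplace mechanism is ε-differentially private: if f : D → ℝ is a query with global sensitivity GS_f = sup over adjacent databases x, x' of |f(x) − f(x')|, and F(x) = f(x) + Lap(GS_f/ε), then for all adjacent x, x' and every measurable set Y, Pr[F(x) ∈ Y] ≤ e^ε · Pr[F(x') ∈ Y]. -/
open MeasureTheory

/-- The Laplace density with scale λ. -/
noncomputable def lapd (y lam : ℝ) : ℝ :=
  (1 / (2 * lam)) * Real.exp (-(|y|) / lam)

lemma integrable_exp_neg_abs_div {b : ℝ} (hb : 0 < b) :
    Integrable (fun y : ℝ => Real.exp (-(|y|) / b)) := by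
  set g : ℝ → ℝ := fun y => Real.exp (-(|y|) / b) with hg
  have hmeas : MeasurableSet (Set.Ioi (0 : ℝ)) := measurableSet_Ioi
  have h1 : IntegrableOn g (Set.Ioi 0) := by
    have := exp_neg_integrableOn_Ioi 0 (show (0:ℝ) < 1 / b by positivity)
    refine this.congr_fun (fun y hy => ?_) hmeas
    have : |y| = y := abs_of_pos hy
    rw [hg]; simp only []
    rw [this]; ring_nf
  have h1' : Integrable ((Set.Ioi (0:ℝ)).indicator g) :=
    (integrable_indicator_iff hmeas).2 h1
  have h2 : Integrable (fun y => (Set.Ioi (0:ℝ)).indicator g (-y)) := h1'.comp_neg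
  have h2' : Integrable ((Set.Iio (0:ℝ)).indicator g) := by
    refine h2.congr (Filter.Eventually.of_forall fun y => ?_)
    by_cases hy : y < 0
    · simp [Set.indicator, Set.mem_Ioi, Set.mem_Iio, hy, neg_pos, hg, abs_neg]
    · simp [Set.indicator, Set.mem_Ioi, Set.mem_Iio, hy, neg_pos]
  have h3 : Integrable ((Set.Iic (0:ℝ)).indicator g) := by
    refine h2'.congr ?_
    have h0 : (volume : Measure ℝ) {(0:ℝ)} = 0 := measure_singleton 0
    filter_upwards [measure_eq_zero_iff_ae_notMem.mp h0] with y hy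
    have hne : y ≠ 0 := hy
    by_cases hlt : y < 0
    · simp [Set.indicator, Set.mem_Iio, Set.mem_Iic, hlt, hlt.le]
    · have : ¬ y ≤ 0 := fun h => hne (le_antisymm h (not_lt.mp hlt))
      simp [Set.indicator, Set.mem_Iio, Set.mem_Iic, hlt, this]
  have : g = fun y => (Set.Ioi (0:ℝ)).indicator g y + (Set.Iic (0:ℝ)).indicator g y := by
    funext y
    by_cases hy : 0 < y
    · simp [Set.indicator, Set.mem_Ioi, Set.mem_Iic, hy, not_le.mpr hy]
    · simp [Set.indicator, Set.mem_Ioi, Set.mem_Iic, hy, not_lt.mp hy]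
  rw [this]
  exact h1'.add h3

lemma integrable_lapd {lam : ℝ} (hlam : 0 < lam) (c : ℝ) :
    Integrable (fun y : ℝ => lapd (y - c) lam) := by
  have h := (integrable_exp_neg_abs_div hlam).comp_sub_right c
  simpa [lapd] using h.const_mul (1 / (2 * lam))

/-- The Laplace mechanism F(x) = f(x) + Lap(GS/ε) is ε-differentially private:
    for adjacent databases, the output probabilities differ by at most a
    factor of e^ε on every measurable set. -/
theorem laplace_mechanism_dp {D : Type*} (Adj : D → D → Prop) (f : D → ℝ)
    (GS ε : ℝ) (hGS : 0 < GS) (hε : 0 < ε)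
    (hsens : ∀ x x', Adj x x' → |f x - f x'| ≤ GS) :
    ∀ x x', Adj x x' → ∀ Y : Set ℝ, MeasurableSet Y →
      (∫ y in Y, lapd (y - f x) (GS / ε)) ≤
        Real.exp ε * ∫ y in Y, lapd (y - f x') (GS / ε) := by
  intro x x' hadj Y hY
  have hlam : 0 < GS / ε := div_pos hGS hε
  have hpt : ∀ y ∈ Y, lapd (y - f x) (GS / ε) ≤ Real.exp ε * lapd (y - f x') (GS / ε) := by
    intro y _
    have habs : |y - f x'| ≤ |y - f x| + GS := by
      calc |y - f x'| = |(y - f x) + (f x - f x')| := by ring_nf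
        _ ≤ |y - f x| + |f x - f x'| := abs_add_le _ _
        _ ≤ |y - f x| + GS := by linarith [hsens x x' hadj]
    have hexp : -(|y - f x|) / (GS / ε) ≤ ε + -(|y - f x'|) / (GS / ε) := by
      have h2 : ε + -(|y - f x'|) / (GS / ε) = (GS + -(|y - f x'|)) / (GS / ε) := by
        field_simp
      rw [h2]
      gcongr
      linarith
    unfold lapd
    rw [mul_comm (Real.exp ε), mul_assoc, ← Real.exp_add]
    have hc : (0:ℝ) ≤ 1 / (2 * (GS / ε)) := by positivity
    exact mul_le_mul_of_nonneg_left (Real.exp_le_exp.2 (by linarith)) hc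
  have int1 : IntegrableOn (fun y => lapd (y - f x) (GS / ε)) Y :=
    (integrable_lapd hlam (f x)).integrableOn
  have int2 : IntegrableOn (fun y => Real.exp ε * lapd (y - f x') (GS / ε)) Y :=
    ((integrable_lapd hlam (f x')).const_mul _).integrableOn
  calc (∫ y in Y, lapd (y - f x) (GS / ε))
      ≤ ∫ y in Y, Real.exp ε * lapd (y - f x') (GS / ε) :=
        setIntegral_mono_on int1 int2 hY hpt
    _ = Real.exp ε * ∫ y in Y, lapd (y - f x') (GS / ε) := integral_const_mul _ _
end
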